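/- Let R_0, R_1, R_2, … be rings with progenerator (R_{n+1}, R_n)-bimodules P_n, and let R_ℤ = ⊕_{i≥j≥0} R_{ij} be the associated Morita ℤ-algebra (R_{ii} = R_i, R_{ij} = P_{i−1} ⊗_{R_{i−1}} ⋯ ⊗_{R_{j+1}} P_j for i > j). If R_0 is left noetherian, then every finitely generated graded left R_ℤ-module is noetherian (its graded submodules are finitely generated). -/

import Mathlib

set_option maxHeartbeats 1000000

open Submodule

namespace MoritaAux

theorem exists_signed_list {G : Type} [AddCommGroup G] {s : Set G} {x : G}
    (hx : x ∈ AddSubgroup.closure s) :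
    ∃ l : List G, (∀ y ∈ l, y ∈ s ∨ -y ∈ s) ∧ l.sum = x := by
  have hneg : ∀ l : List G, (l.map (fun y => -y)).sum = -l.sum := by
    intro l
    induction l with
    | nil => simp
    | cons a t ih => simp [ih, neg_add, add_comm]
  refine AddSubgroup.closure_induction ?_ ?_ ?_ ?_ hx
  · exact fun y hy => ⟨[y], by simp [hy], by simp⟩
  · exact ⟨[], by simp, rfl⟩
  · rintro a b _ _ ⟨l1, h1, rfl⟩ ⟨l2, h2, rfl⟩
    refine ⟨l1 ++ l2, ?_, by simp⟩
    intro y hy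
    rcases List.mem_append.mp hy with h | h
    exacts [h1 y h, h2 y h]
  · rintro a _ ⟨l, h1, rfl⟩
    refine ⟨l.map (fun y => -y), ?_, hneg l⟩
    intro y hy
    obtain ⟨z, hz, rfl⟩ := List.mem_map.mp hy
    rcases h1 z hz with h | h
    · exact Or.inr (by simpa using h)
    · exact Or.inl h

variable {R1 R2 : Type} [Ring R1] [Ring R2]
variable {P Q A B : Type}
variable [AddCommGroup A] [AddCommGroup B] [Module R1 A] [Module R2 B]
variable (act : P → A → B)

def psiSub (S : Submodule R1 A) : Submodule R2 B :=
  Submodule.span R2 {b | ∃ p a, a ∈ S ∧ b = act p a}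

variable (rP : P → R1 → P)
variable (act_addr : ∀ (p : P) (a a' : A), act p (a + a') = act p a + act p a')
variable (act_r : ∀ (p : P) (r : R1) (a : A), act (rP p r) a = act p (r • a))

def phiSub (T : Submodule R2 B) : Submodule R1 A where
  carrier := {a | ∀ p, act p a ∈ T}
  add_mem' := fun {a b} ha hb p => by rw [act_addr]; exact T.add_mem (ha p) (hb p)
  zero_mem' := fun p => by
    rw [show act p (0 : A) = 0 from (AddMonoidHom.mk' (act p) (act_addr p)).map_zero]
    exact T.zero_mem
  smul_mem' := fun r a ha p => by rw [← act_r]; exact ha (rP p r)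

theorem mem_phiSub {T : Submodule R2 B} {a : A} :
    a ∈ phiSub act rP act_addr act_r T ↔ ∀ p, act p a ∈ T := Iff.rfl

theorem phiSub_mono {T T' : Submodule R2 B} (h : T ≤ T') :
    phiSub act rP act_addr act_r T ≤ phiSub act rP act_addr act_r T' :=
  fun _ ha p => h (ha p)

theorem psiSub_phiSub_le (T : Submodule R2 B) :
    psiSub act (phiSub act rP act_addr act_r T) ≤ T := by
  refine span_le.mpr ?_
  rintro b ⟨p, a, ha, rfl⟩
  exact ha p

theorem le_psiSub_phiSub
    (rQ : Q → R2 → Q) (tau : P → Q → R2) (sig : Q → P → R1)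
    (assoc_act : ∀ (p' : P) (q : Q) (p : P) (a : A),
      act p' (sig q p • a) = tau p' q • act p a)
    (tau_r : ∀ (p : P) (q : Q) (r : R2), tau p (rQ q r) = tau p q * r)
    (h1 : (1 : R2) ∈ AddSubgroup.closure {z : R2 | ∃ p q, z = tau p q})
    {T : Submodule R2 B} (hT : T ≤ psiSub act (⊤ : Submodule R1 A)) :
    T ≤ psiSub act (phiSub act rP act_addr act_r T) := by
  have act0 : ∀ p : P, act p (0 : A) = 0 :=
    fun p => (AddMonoidHom.mk' (act p) (act_addr p)).map_zero
  have C : ∀ x ∈ (psiSub act (⊤ : Submodule R1 A) : Submodule R2 B), ∀ q : Q,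
      ∃ y : A, ∀ p' : P, act p' y = tau p' q • x := by
    intro x hx
    refine Submodule.span_induction ?_ ?_ ?_ ?_ hx
    · rintro b ⟨p, a, -, rfl⟩ q
      exact ⟨sig q p • a, fun p' => assoc_act p' q p a⟩
    · exact fun q => ⟨0, fun p' => by rw [act0, smul_zero]⟩
    · rintro x y hx hy ihx ihy q
      obtain ⟨y1, h1'⟩ := ihx q
      obtain ⟨y2, h2'⟩ := ihy q
      exact ⟨y1 + y2, fun p' => by rw [act_addr, h1', h2', smul_add]⟩
    · rintro r x hx ih q
      obtain ⟨y, hy⟩ := ih (rQ q r)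
      exact ⟨y, fun p' => by rw [hy, tau_r, mul_smul]⟩
  intro x hxT
  have key : ∀ r ∈ AddSubgroup.closure {z : R2 | ∃ p q, z = tau p q},
      r • x ∈ (psiSub act (phiSub act rP act_addr act_r T) : Submodule R2 B) := by
    intro r hr
    refine AddSubgroup.closure_induction ?_ ?_ ?_ ?_ hr
    · rintro z ⟨p, q, rfl⟩
      obtain ⟨y, hy⟩ := C x (hT hxT) q
      refine subset_span ⟨p, y, fun p' => ?_, (hy p).symm⟩
      rw [hy p']
      exact T.smul_mem _ hxT
    · rw [zero_smul]; exact zero_mem _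
    · intro a b _ _ iha ihb; rw [add_smul]; exact add_mem iha ihb
    · intro a _ ih; rw [neg_smul]; exact neg_mem ih
  simpa using key 1 h1

include rP act_addr act_r in
theorem isNoetherian_transfer
    (rQ : Q → R2 → Q) (tau : P → Q → R2) (sig : Q → P → R1)
    (assoc_act : ∀ (p' : P) (q : Q) (p : P) (a : A),
      act p' (sig q p • a) = tau p' q • act p a)
    (tau_r : ∀ (p : P) (q : Q) (r : R2), tau p (rQ q r) = tau p q * r)
    (h1 : (1 : R2) ∈ AddSubgroup.closure {z : R2 | ∃ p q, z = tau p q})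
    (hfull : psiSub act (⊤ : Submodule R1 A) = (⊤ : Submodule R2 B))
    (h : IsNoetherian R1 A) : IsNoetherian R2 B := by
  rw [isNoetherian_iff] at h ⊢
  have hid : ∀ T : Submodule R2 B, psiSub act (phiSub act rP act_addr act_r T) = T :=
    fun T => le_antisymm (psiSub_phiSub_le act rP act_addr act_r T)
      (le_psiSub_phiSub act rP act_addr act_r rQ tau sig assoc_act tau_r h1
        (hfull ▸ le_top))
  refine Subrelation.wf ?_ (InvImage.wf (phiSub act rP act_addr act_r) h)
  intro T T' hlt
  have hle : phiSub act rP act_addr act_r T' ≤ phiSub act rP act_addr act_r T :=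
    phiSub_mono act rP act_addr act_r hlt.le
  exact lt_of_le_of_ne hle fun he => hlt.ne ((hid T').symm.trans (by rw [he, hid T]))

include act_addr act_r in
theorem psiSub_top_fg [AddCommGroup P]
    (tau : P → Q → R2) (sig : Q → P → R1)
    (act_addl : ∀ (p p' : P) (a : A), act (p + p') a = act p a + act p' a)
    (ract : ∀ (p : P) (q : Q) (p1 : P) (a : A),
      act (rP p (sig q p1)) a = tau p q • act p1 a)
    (rP_addr : ∀ (p : P) (r s : R1), rP p (r + s) = rP p r + rP p s)
    (rP_one : ∀ p : P, rP p 1 = p)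
    (h1 : (1 : R1) ∈ AddSubgroup.closure {z : R1 | ∃ q p, z = sig q p})
    (hA : (⊤ : Submodule R1 A).FG) :
    (psiSub act (⊤ : Submodule R1 A) : Submodule R2 B).FG := by
  classical
  have act0l : ∀ a : A, act 0 a = 0 := fun a =>
    (AddMonoidHom.mk' (fun u => act u a) (fun u v => act_addl u v a)).map_zero
  have actneg : ∀ (u : P) (a : A), act (-u) a = -act u a := fun u a =>
    (AddMonoidHom.mk' (fun u => act u a) (fun u v => act_addl u v a)).map_neg u
  have act0r : ∀ p : P, act p (0 : A) = 0 :=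
    fun p => (AddMonoidHom.mk' (act p) (act_addr p)).map_zero
  have rP0 : ∀ p : P, rP p 0 = 0 := fun p => (AddMonoidHom.mk' (rP p) (rP_addr p)).map_zero
  have rPneg : ∀ (p : P) (r : R1), rP p (-r) = -rP p r :=
    fun p r => (AddMonoidHom.mk' (rP p) (rP_addr p)).map_neg r
  obtain ⟨l, hl, hsum⟩ := exists_signed_list h1
  have main : ∀ l' : List R1, (∀ y ∈ l', y ∈ {z : R1 | ∃ q p, z = sig q p} ∨
      -y ∈ {z : R1 | ∃ q p, z = sig q p}) →
      ∃ F : Finset P, ∀ (p : P) (a : A),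
        act (rP p l'.sum) a ∈ Submodule.span R2 ((fun p' => act p' a) '' (↑F : Set P)) := by
    intro l' hl'
    induction l' with
    | nil => exact ⟨∅, fun p a => by rw [List.sum_nil, rP0, act0l]; exact zero_mem _⟩
    | cons y t ih =>
      obtain ⟨F, hF⟩ := ih (fun z hz => hl' z (List.mem_cons_of_mem y hz))
      rcases hl' y (List.mem_cons_self (a := y) (l := t)) with ⟨q, p1, hy⟩ | ⟨q, p1, hy⟩
      · refine ⟨insert p1 F, fun p a => ?_⟩
        rw [List.sum_cons, rP_addr, act_addl, hy, ract]
        refine add_mem (Submodule.smul_mem _ _ (subset_span ⟨p1, by simp, rfl⟩)) ?_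
        refine Submodule.span_mono (Set.image_mono ?_) (hF p a)
        exact Finset.coe_subset.mpr (Finset.subset_insert p1 F)
      · have hy' : y = -(sig q p1) := by rw [← hy, neg_neg]
        refine ⟨insert p1 F, fun p a => ?_⟩
        rw [List.sum_cons, rP_addr, act_addl, hy', rPneg, actneg, ract]
        refine add_mem (neg_mem (Submodule.smul_mem _ _ (subset_span ⟨p1, by simp, rfl⟩))) ?_
        refine Submodule.span_mono (Set.image_mono ?_) (hF p a)
        exact Finset.coe_subset.mpr (Finset.subset_insert p1 F)
  obtain ⟨F, hF⟩ := main l hl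
  rw [hsum] at hF
  have hF' : ∀ (p : P) (a : A),
      act p a ∈ Submodule.span R2 ((fun p' => act p' a) '' (↑F : Set P)) := by
    intro p a
    rw [← rP_one p]
    exact hF p a
  obtain ⟨T, hT⟩ := hA
  refine ⟨(F ×ˢ T).image (fun t => act t.1 t.2), le_antisymm ?_ ?_⟩
  · refine span_le.mpr ?_
    intro b hb
    simp only [Finset.coe_image, Set.mem_image, Finset.mem_coe, Finset.mem_product] at hb
    obtain ⟨⟨p, a⟩, -, rfl⟩ := hb
    exact subset_span ⟨p, a, trivial, rfl⟩
  · have hgen : ∀ V : Submodule R2 B, (∀ p1 ∈ F, ∀ a ∈ T, act p1 a ∈ V) →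
        ∀ (a : A) (p : P), act p a ∈ V := by
      intro V hV a
      have ha : a ∈ Submodule.span R1 (↑T : Set A) := by rw [hT]; trivial
      refine Submodule.span_induction ?_ ?_ ?_ ?_ ha
      · intro a haT p'
        refine span_le.mpr ?_ (hF' p' a)
        rintro b ⟨p1, hp1, rfl⟩
        exact hV p1 hp1 a haT
      · intro p'
        rw [act0r]
        exact zero_mem _
      · intro x y hx hy ihx ihy p'
        rw [act_addr]
        exact add_mem (ihx p') (ihy p')
      · intro r x hx ih p'
        rw [← act_r]
        exact ih (rP p' r)
    refine span_le.mpr ?_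
    rintro b ⟨p, a, -, rfl⟩
    refine hgen _ (fun p1 hp1 a2 ha2 => subset_span ?_) a p
    simp only [Finset.coe_image, Set.mem_image, Finset.mem_coe, Finset.mem_product]
    exact ⟨(p1, a2), ⟨hp1, ha2⟩, rfl⟩

theorem dual_fg {Q' : Type} [AddCommGroup Q'] [Module R1 Q']
    (rQ : Q' → R2 → Q') (tau : P → Q' → R2) (sig : Q' → P → R1)
    (hmix : ∀ (q : Q') (p : P) (q2 : Q'), rQ q (tau p q2) = sig q p • q2)
    (rQ_addr : ∀ (q : Q') (r s : R2), rQ q (r + s) = rQ q r + rQ q s)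
    (rQ_one : ∀ q : Q', rQ q 1 = q)
    (h1 : (1 : R2) ∈ AddSubgroup.closure {z : R2 | ∃ p q, z = tau p q}) :
    (⊤ : Submodule R1 Q').FG := by
  classical
  obtain ⟨l, hl, hsum⟩ := exists_signed_list h1
  have rQ0 : ∀ q, rQ q 0 = 0 := fun q => (AddMonoidHom.mk' (rQ q) (rQ_addr q)).map_zero
  have rQneg : ∀ q r, rQ q (-r) = -rQ q r :=
    fun q r => (AddMonoidHom.mk' (rQ q) (rQ_addr q)).map_neg r
  have main : ∀ l' : List R2, (∀ y ∈ l', y ∈ {z : R2 | ∃ p q, z = tau p q} ∨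
      -y ∈ {z : R2 | ∃ p q, z = tau p q}) →
      ∃ F : Finset Q', ∀ q : Q', rQ q l'.sum ∈ Submodule.span R1 (↑F : Set Q') := by
    intro l' hl'
    induction l' with
    | nil => exact ⟨∅, fun q => by rw [List.sum_nil, rQ0]; exact zero_mem _⟩
    | cons y t ih =>
      obtain ⟨F, hF⟩ := ih (fun z hz => hl' z (List.mem_cons_of_mem y hz))
      rcases hl' y (List.mem_cons_self (a := y) (l := t)) with ⟨p, q2, hy⟩ | ⟨p, q2, hy⟩
      · refine ⟨insert q2 F, fun q => ?_⟩
        rw [List.sum_cons, rQ_addr, hy, hmix]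
        refine add_mem (Submodule.smul_mem _ _ (subset_span (by simp))) ?_
        exact Submodule.span_mono (Finset.coe_subset.mpr (Finset.subset_insert q2 F)) (hF q)
      · have hy' : y = -(tau p q2) := by rw [← hy, neg_neg]
        refine ⟨insert q2 F, fun q => ?_⟩
        rw [List.sum_cons, rQ_addr, hy', rQneg, hmix]
        refine add_mem (neg_mem (Submodule.smul_mem _ _ (subset_span (by simp)))) ?_
        exact Submodule.span_mono (Finset.coe_subset.mpr (Finset.subset_insert q2 F)) (hF q)
  obtain ⟨F, hF⟩ := main l hl
  refine ⟨F, ?_⟩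
  rw [eq_top_iff]
  intro q _
  rw [← rQ_one q, ← hsum]
  exact hF q

def downMap {R : ℕ → Type} [∀ n, Ring (R n)] {M : ℕ → Type} [∀ n, AddCommGroup (M n)]
    [∀ n, Module (R n) (M n)]
    (Phi : ∀ j, Submodule (R (j + 1)) (M (j + 1)) → Submodule (R j) (M j)) (n0 : ℕ) :
    ∀ k, Submodule (R (n0 + k)) (M (n0 + k)) → Submodule (R n0) (M n0)
  | 0 => id
  | (k + 1) => fun T => downMap Phi n0 k (Phi (n0 + k) T)

theorem downMap_succ {R : ℕ → Type} [∀ n, Ring (R n)] {M : ℕ → Type} [∀ n, AddCommGroup (M n)]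
    [∀ n, Module (R n) (M n)]
    (Phi : ∀ j, Submodule (R (j + 1)) (M (j + 1)) → Submodule (R j) (M j)) (n0 k : ℕ)
    (T : Submodule (R (n0 + (k + 1))) (M (n0 + (k + 1)))) :
    downMap Phi n0 (k + 1) T = downMap Phi n0 k (Phi (n0 + k) T) := rfl

theorem downMap_mono {R : ℕ → Type} [∀ n, Ring (R n)] {M : ℕ → Type} [∀ n, AddCommGroup (M n)]
    [∀ n, Module (R n) (M n)]
    {Phi : ∀ j, Submodule (R (j + 1)) (M (j + 1)) → Submodule (R j) (M j)}
    (hPhi : ∀ j, Monotone (Phi j)) (n0 : ℕ) :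
    ∀ k, Monotone (downMap Phi n0 k)
  | 0 => fun _ _ h => h
  | (k + 1) => fun _ _ h => downMap_mono hPhi n0 k (hPhi (n0 + k) h)

theorem downMap_inj {R : ℕ → Type} [∀ n, Ring (R n)] {M : ℕ → Type} [∀ n, AddCommGroup (M n)]
    [∀ n, Module (R n) (M n)]
    {Phi : ∀ j, Submodule (R (j + 1)) (M (j + 1)) → Submodule (R j) (M j)} {n0 : ℕ}
    (hPhi : ∀ j, n0 ≤ j → Function.Injective (Phi j)) :
    ∀ k, Function.Injective (downMap Phi n0 k)
  | 0 => fun _ _ h => h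
  | (k + 1) => fun T T' h =>
      hPhi (n0 + k) (Nat.le_add_right n0 k) (downMap_inj hPhi k h)

end MoritaAux


/-- let `R_0, R_1, …` be rings and `P_n` progenerator
`(R_{n+1}, R_n)`-bimodules (encoded, as usual, by a Morita context: a dual bimodule
`Q_n` and two surjective balanced pairings `τ_n : P_n × Q_n → R_{n+1}` and
`σ_n : Q_n × P_n → R_n`), and let `R_ℤ = ⊕_{i≥j≥0} R_{ij}` be the associated Morita
ℤ-algebra.  A graded left `R_ℤ`-module is encoded by its components: a family of
`R_n`-modules `M_n` together with balanced bilinear actions `P_n × M_n → M_{n+1}`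
(the tensor strings `R_{ij}` then act via iterated `P`-actions).  If `R_0` is left
noetherian, then every finitely generated graded left `R_ℤ`-module is noetherian:
all of its graded submodules are finitely generated. -/
theorem morita_Zalgebra_noetherian
    -- the rings R_n
    (R : ℕ → Type) [∀ n, Ring (R n)]
    -- the bimodules P_n with left R_{n+1}- and right R_n-action
    (P : ℕ → Type) [∀ n, AddCommGroup (P n)]
    (lP : ∀ n, R (n + 1) → P n → P n) (rP : ∀ n, P n → R n → P n)
    (lP_addl : ∀ n (r s : R (n + 1)) p, lP n (r + s) p = lP n r p + lP n s p)
    (lP_addr : ∀ n (r : R (n + 1)) (p q : P n), lP n r (p + q) = lP n r p + lP n r q)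
    (lP_one : ∀ n p, lP n 1 p = p)
    (lP_mul : ∀ n (r s : R (n + 1)) p, lP n (r * s) p = lP n r (lP n s p))
    (rP_addl : ∀ n (p q : P n) r, rP n (p + q) r = rP n p r + rP n q r)
    (rP_addr : ∀ n (p : P n) (r s : R n), rP n p (r + s) = rP n p r + rP n p s)
    (rP_one : ∀ n p, rP n p 1 = p)
    (rP_mul : ∀ n (p : P n) (r s : R n), rP n p (r * s) = rP n (rP n p r) s)
    (lrP : ∀ n (r : R (n + 1)) (p : P n) (s : R n), rP n (lP n r p) s = lP n r (rP n p s))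
    -- the dual bimodules Q_n with left R_n- and right R_{n+1}-action
    (Q : ℕ → Type) [∀ n, AddCommGroup (Q n)]
    (lQ : ∀ n, R n → Q n → Q n) (rQ : ∀ n, Q n → R (n + 1) → Q n)
    (lQ_addl : ∀ n (r s : R n) q, lQ n (r + s) q = lQ n r q + lQ n s q)
    (lQ_addr : ∀ n (r : R n) (q q' : Q n), lQ n r (q + q') = lQ n r q + lQ n r q')
    (lQ_one : ∀ n q, lQ n 1 q = q)
    (lQ_mul : ∀ n (r s : R n) q, lQ n (r * s) q = lQ n r (lQ n s q))
    (rQ_addl : ∀ n (q q' : Q n) r, rQ n (q + q') r = rQ n q r + rQ n q' r)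
    (rQ_addr : ∀ n (q : Q n) (r s : R (n + 1)), rQ n q (r + s) = rQ n q r + rQ n q s)
    (rQ_one : ∀ n q, rQ n q 1 = q)
    (rQ_mul : ∀ n (q : Q n) (r s : R (n + 1)), rQ n q (r * s) = rQ n (rQ n q r) s)
    (lrQ : ∀ n (r : R n) (q : Q n) (s : R (n + 1)), rQ n (lQ n r q) s = lQ n r (rQ n q s))
    -- the Morita pairings τ : P ⊗ Q → R_{n+1} and σ : Q ⊗ P → R_n
    (tau : ∀ n, P n → Q n → R (n + 1)) (sig : ∀ n, Q n → P n → R n)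
    (tau_addl : ∀ n (p p' : P n) q, tau n (p + p') q = tau n p q + tau n p' q)
    (tau_addr : ∀ n (p : P n) (q q' : Q n), tau n p (q + q') = tau n p q + tau n p q')
    (sig_addl : ∀ n (q q' : Q n) p, sig n (q + q') p = sig n q p + sig n q' p)
    (sig_addr : ∀ n (q : Q n) (p p' : P n), sig n q (p + p') = sig n q p + sig n q p')
    (tau_l : ∀ n (r : R (n + 1)) p q, tau n (lP n r p) q = r * tau n p q)
    (tau_mid : ∀ n (p : P n) (r : R n) q, tau n (rP n p r) q = tau n p (lQ n r q))
    (tau_r : ∀ n (p : P n) q (r : R (n + 1)), tau n p (rQ n q r) = tau n p q * r)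
    (sig_l : ∀ n (r : R n) q p, sig n (lQ n r q) p = r * sig n q p)
    (sig_mid : ∀ n (q : Q n) (r : R (n + 1)) p, sig n (rQ n q r) p = sig n q (lP n r p))
    (sig_r : ∀ n (q : Q n) p (r : R n), sig n q (rP n p r) = sig n q p * r)
    -- the Morita context associativity conditions: ⟨p,q⟩·p' = p·⟨q,p'⟩, and dually
    (assocP : ∀ n (p : P n) (q : Q n) (p' : P n),
      lP n (tau n p q) p' = rP n p (sig n q p'))
    (assocQ : ∀ n (q : Q n) (p : P n) (q' : Q n),
      lQ n (sig n q p) q' = rQ n q (tau n p q'))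
    -- the pairings are surjective traces (so each `P_n` is a progenerator)
    (tau_surj : ∀ n (r : R (n + 1)),
      r ∈ AddSubgroup.closure {x : R (n + 1) | ∃ p q, x = tau n p q})
    (sig_surj : ∀ n (r : R n),
      r ∈ AddSubgroup.closure {x : R n | ∃ q p, x = sig n q p})
    -- R_0 is left noetherian
    (hnoeth : IsNoetherianRing (R 0))
    -- a graded left R_ℤ-module, given by its components
    (M : ℕ → Type) [∀ n, AddCommGroup (M n)] [∀ n, Module (R n) (M n)]
    (act : ∀ n, P n → M n → M (n + 1))
    (act_addl : ∀ n (p p' : P n) m, act n (p + p') m = act n p m + act n p' m)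
    (act_addr : ∀ n (p : P n) (m m' : M n), act n p (m + m') = act n p m + act n p m')
    (act_l : ∀ n (r : R (n + 1)) (p : P n) m, act n (lP n r p) m = r • act n p m)
    (act_r : ∀ n (p : P n) (r : R n) m, act n (rP n p r) m = act n p (r • m))
    -- which is finitely generated
    (hfg : ∃ gens : Finset (Σ n : ℕ, M n),
      ∀ N : ∀ n, Submodule (R n) (M n),
        (∀ (n : ℕ) (p : P n) (m : M n), m ∈ N n → act n p m ∈ N (n + 1)) →
        (∀ g ∈ gens, g.2 ∈ N g.1) → ∀ (n : ℕ) (x : M n), x ∈ N n) :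
    -- conclusion: every graded submodule is finitely generated
    ∀ N : ∀ n, Submodule (R n) (M n),
      (∀ (n : ℕ) (p : P n) (m : M n), m ∈ N n → act n p m ∈ N (n + 1)) →
      ∃ gens : Finset (Σ n : ℕ, M n),
        (∀ g ∈ gens, g.2 ∈ N g.1) ∧
        ∀ N' : ∀ n, Submodule (R n) (M n),
          (∀ (n : ℕ) (p : P n) (m : M n), m ∈ N' n → act n p m ∈ N' (n + 1)) →
          (∀ g ∈ gens, g.2 ∈ N' g.1) →
          ∀ (n : ℕ) (x : M n), x ∈ N n → x ∈ N' n := by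
  classical
  obtain ⟨gens, hgens⟩ := hfg
  obtain ⟨n0, hdeg⟩ : ∃ n0 : ℕ, ∀ g ∈ gens, g.1 ≤ n0 :=
    ⟨gens.sup Sigma.fst, fun g hg => Finset.le_sup hg⟩
  have key := hgens
    (fun n => Nat.rec (motive := fun n => Submodule (R n) (M n))
      (Submodule.span (R 0) {m | (⟨0, m⟩ : Σ n, M n) ∈ gens})
      (fun k _ => Submodule.span (R (k + 1))
        ({m | (⟨k + 1, m⟩ : Σ n, M n) ∈ gens} ∪ {b | ∃ p a, b = act k p a})) n)
    (fun n p m _ => Submodule.subset_span (Or.inr ⟨p, m, rfl⟩))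
    (by
      rintro ⟨n, m⟩ hg
      cases n with
      | zero => exact Submodule.subset_span hg
      | succ k => exact Submodule.subset_span (Or.inl hg))
  have hMtop0 : Submodule.span (R 0) {m | (⟨0, m⟩ : Σ n, M n) ∈ gens} = ⊤ :=
    eq_top_iff.mpr fun x _ => key 0 x
  have hMtopsucc : ∀ k, Submodule.span (R (k + 1))
      ({m | (⟨k + 1, m⟩ : Σ n, M n) ∈ gens} ∪ {b | ∃ p a, b = act k p a}) = ⊤ :=
    fun k => eq_top_iff.mpr fun x _ => key (k + 1) x
  have hpsiset : ∀ k, (MoritaAux.psiSub (act k) (⊤ : Submodule (R k) (M k))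
      : Submodule (R (k + 1)) (M (k + 1)))
      = Submodule.span (R (k + 1)) {b | ∃ p a, b = act k p a} := by
    intro k
    unfold MoritaAux.psiSub
    congr 1
    ext b
    simp
  have hfull : ∀ k, n0 ≤ k → (MoritaAux.psiSub (act k) (⊤ : Submodule (R k) (M k))
      : Submodule (R (k + 1)) (M (k + 1))) = ⊤ := by
    intro k hk
    have hempty : {m | (⟨k + 1, m⟩ : Σ n, M n) ∈ gens} = (∅ : Set (M (k + 1))) := by
      ext m
      simp only [Set.mem_setOf_eq, Set.mem_empty_iff_false, iff_false]
      intro h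
      have := hdeg _ h
      simp only at this
      omega
    rw [hpsiset k, ← hMtopsucc k, hempty, Set.empty_union]
  have hRnoeth : ∀ n, IsNoetherianRing (R n) := by
    intro n
    induction n with
    | zero => exact hnoeth
    | succ k ih =>
      letI : SMul (R k) (Q k) := ⟨lQ k⟩
      letI : Module (R k) (Q k) :=
        Module.ofMinimalAxioms (lQ_addr k) (lQ_addl k) (lQ_mul k) (lQ_one k)
      have hQfg : (⊤ : Submodule (R k) (Q k)).FG :=
        MoritaAux.dual_fg (P := P k) (rQ k) (tau k) (sig k)
          (fun q p q2 => (assocQ k q p q2).symm) (rQ_addr k) (rQ_one k) (tau_surj k 1)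
      haveI : Module.Finite (R k) (Q k) := ⟨hQfg⟩
      haveI := ih
      haveI hQnoeth : IsNoetherian (R k) (Q k) :=
        isNoetherian_of_isNoetherianRing_of_finite _ _
      have hfullQ : (MoritaAux.psiSub (tau k) (⊤ : Submodule (R k) (Q k))
          : Submodule (R (k + 1)) (R (k + 1))) = ⊤ := by
        have h1m : (1 : R (k + 1)) ∈ (MoritaAux.psiSub (tau k) (⊤ : Submodule (R k) (Q k))
            : Submodule (R (k + 1)) (R (k + 1))) := by
          have hsub : {z : R (k + 1) | ∃ p q, z = tau k p q} ⊆
              ((MoritaAux.psiSub (tau k) (⊤ : Submodule (R k) (Q k))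
                : Submodule (R (k + 1)) (R (k + 1))).toAddSubgroup : Set (R (k + 1))) := by
            rintro z ⟨p, q, rfl⟩
            exact Submodule.subset_span ⟨p, q, trivial, rfl⟩
          exact (AddSubgroup.closure_le _).mpr hsub (tau_surj k 1)
        rw [eq_top_iff]
        intro x _
        simpa using Submodule.smul_mem _ x h1m
      exact MoritaAux.isNoetherian_transfer (tau k) (rP k) (tau_addr k)
        (fun p r a => tau_mid k p r a) (rQ k) (tau k) (sig k)
        (fun p' q p a => by
          show tau k p' (lQ k (sig k q p) a) = tau k p' q • tau k p a
          rw [← tau_mid k p' (sig k q p) a, ← assocP k p' q p, tau_l k, smul_eq_mul])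
        (tau_r k) (tau_surj k 1) hfullQ hQnoeth
  have hMfg : ∀ n, (⊤ : Submodule (R n) (M n)).FG := by
    intro n
    induction n with
    | zero =>
      rw [← hMtop0]
      exact Submodule.fg_span
        (Set.Finite.preimage sigma_mk_injective.injOn gens.finite_toSet)
    | succ k ih =>
      rw [← hMtopsucc k, Submodule.span_union]
      refine Submodule.FG.sup ?_ ?_
      · exact Submodule.fg_span
          (Set.Finite.preimage sigma_mk_injective.injOn gens.finite_toSet)
      · rw [← hpsiset k]
        exact MoritaAux.psiSub_top_fg (act k) (rP k) (act_addr k) (act_r k)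
          (tau k) (sig k) (act_addl k)
          (fun p q p1 a => by rw [← assocP k p q p1, act_l k])
          (rP_addr k) (rP_one k) (sig_surj k 1) ih
  have hMnoeth : ∀ n, IsNoetherian (R n) (M n) := by
    intro n
    haveI := hRnoeth n
    haveI : Module.Finite (R n) (M n) := ⟨hMfg n⟩
    exact isNoetherian_of_isNoetherianRing_of_finite _ _
  intro N hN
  let Phi : ∀ j, Submodule (R (j + 1)) (M (j + 1)) → Submodule (R j) (M j) :=
    fun j => MoritaAux.phiSub (act j) (rP j) (act_addr j) (act_r j)
  have hPhi_mono : ∀ j, Monotone (Phi j) := fun j _ _ h =>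
    MoritaAux.phiSub_mono (act j) (rP j) (act_addr j) (act_r j) h
  have hPhi_id : ∀ j, n0 ≤ j → ∀ T, MoritaAux.psiSub (act j) (Phi j T) = T := by
    intro j hj T
    refine le_antisymm
      (MoritaAux.psiSub_phiSub_le (act j) (rP j) (act_addr j) (act_r j) T) ?_
    refine MoritaAux.le_psiSub_phiSub (act j) (rP j) (act_addr j) (act_r j)
      (rQ j) (tau j) (sig j)
      (fun p' q p a => by rw [← act_r j p' (sig j q p) a, ← assocP j p' q p, act_l j])
      (tau_r j) (tau_surj j 1) ?_
    rw [hfull j hj]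
    exact le_top
  have hPhi_inj : ∀ j, n0 ≤ j → Function.Injective (Phi j) := by
    intro j hj T T' h
    rw [← hPhi_id j hj T, ← hPhi_id j hj T', h]
  have hNlePhi : ∀ j, N j ≤ Phi j (N (j + 1)) := fun j m hm p => hN j p m hm
  have cmono : Monotone (fun k => MoritaAux.downMap Phi n0 k (N (n0 + k))) := by
    apply monotone_nat_of_le_succ
    intro k
    show MoritaAux.downMap Phi n0 k (N (n0 + k))
      ≤ MoritaAux.downMap Phi n0 (k + 1) (N (n0 + (k + 1)))
    rw [MoritaAux.downMap_succ]
    exact MoritaAux.downMap_mono hPhi_mono n0 k (hNlePhi (n0 + k))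
  obtain ⟨k1, hk1⟩ := monotone_stabilizes_iff_noetherian.mpr (hMnoeth n0)
    ⟨fun k => MoritaAux.downMap Phi n0 k (N (n0 + k)), cmono⟩
  have hPhiN : ∀ j, n0 + k1 ≤ j → Phi j (N (j + 1)) = N j := by
    intro j hj
    obtain ⟨k, rfl⟩ : ∃ k, j = n0 + k := ⟨j - n0, by omega⟩
    have heq : MoritaAux.downMap Phi n0 (k + 1) (N (n0 + (k + 1)))
        = MoritaAux.downMap Phi n0 k (N (n0 + k)) :=
      (hk1 (k + 1) (by omega)).symm.trans (hk1 k (by omega))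
    rw [MoritaAux.downMap_succ] at heq
    exact MoritaAux.downMap_inj hPhi_inj k heq
  have hNstep : ∀ j, n0 + k1 ≤ j →
      (MoritaAux.psiSub (act j) (N j) : Submodule (R (j + 1)) (M (j + 1))) = N (j + 1) := by
    intro j hj
    have h2 : N (j + 1) ≤ MoritaAux.psiSub (act j) (Phi j (N (j + 1))) :=
      MoritaAux.le_psiSub_phiSub (act j) (rP j) (act_addr j) (act_r j)
        (rQ j) (tau j) (sig j)
        (fun p' q p a => by rw [← act_r j p' (sig j q p) a, ← assocP j p' q p, act_l j])
        (tau_r j) (tau_surj j 1) (by rw [hfull j (by omega)]; exact le_top)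
    rw [hPhiN j hj] at h2
    refine le_antisymm ?_ h2
    refine Submodule.span_le.mpr ?_
    rintro b ⟨p, a, ha, rfl⟩
    exact hN j p a ha
  have hNfg : ∀ n, ∃ sn : Finset (M n), Submodule.span (R n) (↑sn : Set (M n)) = N n := by
    intro n
    haveI := hMnoeth n
    exact IsNoetherian.noetherian (N n)
  choose s hs using hNfg
  refine ⟨(Finset.range (n0 + k1 + 1)).biUnion (fun n => (s n).image (Sigma.mk n)), ?_, ?_⟩
  · intro g hg
    simp only [Finset.mem_biUnion, Finset.mem_image, Finset.mem_range] at hg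
    obtain ⟨n, -, x, hx, rfl⟩ := hg
    show x ∈ N n
    rw [← hs n]
    exact Submodule.subset_span hx
  · intro N' hN' hg'
    have low : ∀ n, n ≤ n0 + k1 → N n ≤ N' n := by
      intro n hn
      rw [← hs n]
      refine Submodule.span_le.mpr ?_
      intro x hx
      refine hg' ⟨n, x⟩ ?_
      simp only [Finset.mem_biUnion, Finset.mem_image, Finset.mem_range]
      exact ⟨n, by omega, x, hx, rfl⟩
    intro n
    induction n with
    | zero => exact fun x hx => low 0 (Nat.zero_le _) hx
    | succ k ih =>
      by_cases hk : k + 1 ≤ n0 + k1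
      · exact fun x hx => low (k + 1) hk hx
      · intro x hx
        rw [← hNstep k (by omega)] at hx
        have hle : (MoritaAux.psiSub (act k) (N k)
            : Submodule (R (k + 1)) (M (k + 1))) ≤ N' (k + 1) := by
          refine Submodule.span_le.mpr ?_
          rintro b ⟨p, a, ha, rfl⟩
          exact hN' k p a (ih a ha)
        exact hle hx
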